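/- Let c ∈ F∖{0}. If c does not belong to the set {λ_1^{i_1}·λ_2^{i_2}···λ_n^{i_n} | (i_1,…,i_n) ∈ ℤ^n} of integer power products of λ_1,…,λ_n, then the only g ∈ K satisfying c·σ(g) − g = 0 is g = 0. -/

import Mathlib

open MvPolynomial

/-- `K F n` is the rational function field `F(α₁,…,αₙ)`. -/
abbrev K (F : Type*) [Field F] (n : ℕ) := FractionRing (MvPolynomial (Fin n) F)

/-- The canonical image of the variable `αᵢ` in `K F n`. -/
noncomputable def α {F : Type*} [Field F] {n : ℕ} (i : Fin n) : K F n :=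
  algebraMap (MvPolynomial (Fin n) F) (K F n) (X i)

/-- The scaling `F`-algebra endomorphism `X i ↦ lam i • X i` of the polynomial ring. -/
noncomputable def stmt16Phi {F : Type*} [Field F] {n : ℕ} (lam : Fin n → F) :
    MvPolynomial (Fin n) F →ₐ[F] MvPolynomial (Fin n) F :=
  aeval (fun i => C (lam i) * X i)

lemma stmt16Phi_monomial {F : Type*} [Field F] {n : ℕ} (lam : Fin n → F)
    (d : Fin n →₀ ℕ) (a : F) :
    stmt16Phi lam (monomial d a) = monomial d ((∏ i, lam i ^ d i) * a) := by
  rw [stmt16Phi, aeval_monomial, monomial_eq]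
  rw [show (d.prod fun i k => (C (lam i) * X i : MvPolynomial (Fin n) F) ^ k)
      = d.prod fun i k => C (lam i) ^ k * X i ^ k by
    apply Finsupp.prod_congr; intros; rw [mul_pow]]
  rw [Finsupp.prod_mul]
  have h1 : (d.prod fun i k => (C (lam i) : MvPolynomial (Fin n) F) ^ k)
      = C (∏ i, lam i ^ d i) := by
    rw [← Finsupp.prod_pow d lam, Finsupp.prod, Finsupp.prod, map_prod]
    simp
  rw [h1, map_mul, algebraMap_eq]
  ring

lemma stmt16_coeff_phi {F : Type*} [Field F] {n : ℕ} (lam : Fin n → F)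
    (p : MvPolynomial (Fin n) F) (m : Fin n →₀ ℕ) :
    coeff m (stmt16Phi lam p) = (∏ i, lam i ^ m i) * coeff m p := by
  induction p using MvPolynomial.induction_on' with
  | monomial d a =>
    rw [stmt16Phi_monomial, coeff_monomial, coeff_monomial]
    split_ifs with h
    · subst h; ring
    · ring
  | add p q hp hq => simp [map_add, hp, hq, mul_add]

/-- Coefficient of a product at the sum of the leading monomials. -/
lemma stmt16_coeff_mul_of_max {F : Type*} [Field F] {n : ℕ} (mo : MonomialOrder (Fin n))
    {p q : MvPolynomial (Fin n) F} {m0 k0 : Fin n →₀ ℕ}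
    (hp : ∀ m, coeff m p ≠ 0 → mo.toSyn m ≤ mo.toSyn m0)
    (hq : ∀ m, coeff m q ≠ 0 → mo.toSyn m ≤ mo.toSyn k0) :
    coeff (m0 + k0) (p * q) = coeff m0 p * coeff k0 q := by
  classical
  rw [coeff_mul]
  apply Finset.sum_eq_single (m0, k0)
  · intro b hb hne
    by_contra h
    have h1 : coeff b.1 p ≠ 0 := fun h0 => h (by rw [h0, zero_mul])
    have h2 : coeff b.2 q ≠ 0 := fun h0 => h (by rw [h0, mul_zero])
    have hle1 := hp _ h1
    have hle2 := hq _ h2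
    have hsum : b.1 + b.2 = m0 + k0 := by simpa using hb
    have hsum' : mo.toSyn b.1 + mo.toSyn b.2 = mo.toSyn m0 + mo.toSyn k0 := by
      rw [← map_add, ← map_add, hsum]
    have e1 : mo.toSyn b.1 = mo.toSyn m0 := by
      rcases lt_or_eq_of_le hle1 with hlt | he
      · exact absurd hsum' (ne_of_lt (add_lt_add_of_lt_of_le hlt hle2))
      · exact he
    have e2 : mo.toSyn b.2 = mo.toSyn k0 := by
      rw [e1] at hsum'; exact add_left_cancel hsum'
    apply hne
    have := mo.toSyn.injective e1
    have := mo.toSyn.injective e2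
    exact Prod.ext ‹b.1 = m0› ‹b.2 = k0›
  · intro h
    simp at h

/-- Let `σ` be the `F`-algebra automorphism of `K = F(α₁,…,αₙ)` with
`σ(αᵢ) = λᵢ αᵢ` (all `λᵢ` nonzero). Let `c ∈ F∖{0}`. If `c` is not an integer power
product `λ₁^{i₁}⋯λₙ^{iₙ}` (with `(i₁,…,iₙ) ∈ ℤⁿ`), then the only `g ∈ K` with
`c·σ(g) − g = 0` is `g = 0`. -/
theorem stmt_16 {F : Type*} [Field F] [Algebra F (AlgebraicClosure ℚ)]
    {n : ℕ} (hn : 1 ≤ n)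
    (lam : Fin n → F) (hlam : ∀ i, lam i ≠ 0)
    (σ : K F n ≃ₐ[F] K F n)
    (hσ : ∀ i, σ (α i) = algebraMap F (K F n) (lam i) * α i)
    (c : F) (hc : c ≠ 0)
    (hcpow : ¬ ∃ i : Fin n → ℤ, (∏ t, lam t ^ i t) = c) :
    ∀ g : K F n, algebraMap F (K F n) c * σ g - g = 0 → g = 0 := by
  classical
  set A := algebraMap (MvPolynomial (Fin n) F) (K F n) with hA
  have hcomm : ∀ r, σ (A r) = A (stmt16Phi lam r) := by
    have h : (σ.toAlgHom.comp (IsScalarTower.toAlgHom F (MvPolynomial (Fin n) F) (K F n)))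
        = (IsScalarTower.toAlgHom F (MvPolynomial (Fin n) F) (K F n)).comp (stmt16Phi lam) := by
      apply MvPolynomial.algHom_ext
      intro i
      simp only [AlgHom.coe_comp, IsScalarTower.coe_toAlgHom', Function.comp_apply,
        AlgHom.commutes, stmt16Phi, aeval_X, map_mul]
      have hC : (algebraMap (MvPolynomial (Fin n) F) (K F n)) (C (lam i))
          = algebraMap F (K F n) (lam i) := by
        rw [← MvPolynomial.algebraMap_eq, ← IsScalarTower.algebraMap_apply]
      rw [hC]
      exact hσ i
    intro r
    exact AlgHom.congr_fun h r
  have hinj : Function.Injective A := IsFractionRing.injective _ _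
  intro g hg
  obtain ⟨p, q, hq, hpq⟩ := IsFractionRing.div_surjective (A := MvPolynomial (Fin n) F) g
  have hq0 : q ≠ 0 := nonZeroDivisors.ne_zero hq
  have hAq : A q ≠ 0 := fun h => hq0 (hinj (by simpa using h))
  have hAQ : A (stmt16Phi lam q) ≠ 0 := by
    rw [← hcomm]
    simpa using fun h => hAq (σ.injective (by simpa using h))
  -- reduce to p = 0
  by_cases hp0 : p = 0
  · rw [← hpq, hp0, map_zero, zero_div]
  exfalso
  -- the field equation
  have hg' : algebraMap F (K F n) c * (A (stmt16Phi lam p) / A (stmt16Phi lam q))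
      = A p / A q := by
    rw [sub_eq_zero] at hg
    rw [← hcomm, ← hcomm, ← map_div₀ σ, hpq, hg]
  have hK : algebraMap F (K F n) c * A (stmt16Phi lam p) * A q
      = A p * A (stmt16Phi lam q) := by
    rw [← mul_div_assoc, div_eq_div_iff hAQ hAq] at hg'
    exact hg'
  -- polynomial identity
  have key : C c * stmt16Phi lam p * q = p * stmt16Phi lam q := by
    apply hinj
    have hC : A (C c) = algebraMap F (K F n) c := by
      rw [hA, ← MvPolynomial.algebraMap_eq, ← IsScalarTower.algebraMap_apply]
    rw [map_mul, map_mul, map_mul, hC, hK]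
  -- leading monomials
  set mo : MonomialOrder (Fin n) := MonomialOrder.lex with hmo
  obtain ⟨m0, hm0mem, hm0max⟩ := Finset.exists_max_image p.support (fun m => mo.toSyn m)
    (by rwa [Finset.nonempty_iff_ne_empty, Ne, MvPolynomial.support_eq_empty])
  obtain ⟨k0, hk0mem, hk0max⟩ := Finset.exists_max_image q.support (fun m => mo.toSyn m)
    (by rwa [Finset.nonempty_iff_ne_empty, Ne, MvPolynomial.support_eq_empty])
  have ha : coeff m0 p ≠ 0 := MvPolynomial.mem_support_iff.mp hm0mem
  have hb : coeff k0 q ≠ 0 := MvPolynomial.mem_support_iff.mp hk0mem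
  have hpmax : ∀ m, coeff m p ≠ 0 → mo.toSyn m ≤ mo.toSyn m0 :=
    fun m hm => hm0max m (MvPolynomial.mem_support_iff.mpr hm)
  have hqmax : ∀ m, coeff m q ≠ 0 → mo.toSyn m ≤ mo.toSyn k0 :=
    fun m hm => hk0max m (MvPolynomial.mem_support_iff.mpr hm)
  set Lm : F := ∏ i, lam i ^ m0 i with hLm
  set Lk : F := ∏ i, lam i ^ k0 i with hLk
  have hLm0 : Lm ≠ 0 := Finset.prod_ne_zero_iff.mpr fun t _ => pow_ne_zero _ (hlam t)
  have hLk0 : Lk ≠ 0 := Finset.prod_ne_zero_iff.mpr fun t _ => pow_ne_zero _ (hlam t)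
  have hL : coeff (m0 + k0) (C c * stmt16Phi lam p * q)
      = (c * (Lm * coeff m0 p)) * coeff k0 q := by
    rw [mul_assoc, coeff_C_mul, mul_assoc]
    congr 1
    rw [stmt16_coeff_mul_of_max mo (fun m hm => hpmax m (by
        intro h0
        rw [stmt16_coeff_phi, h0, mul_zero] at hm
        exact hm rfl)) hqmax,
      stmt16_coeff_phi]
  have hR : coeff (m0 + k0) (p * stmt16Phi lam q)
      = coeff m0 p * (Lk * coeff k0 q) := by
    rw [stmt16_coeff_mul_of_max mo hpmax (fun m hm => hqmax m (by
        intro h0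
        rw [stmt16_coeff_phi, h0, mul_zero] at hm
        exact hm rfl)),
      stmt16_coeff_phi]
  have heq : (c * Lm) * (coeff m0 p * coeff k0 q) = Lk * (coeff m0 p * coeff k0 q) := by
    have := congrArg (coeff (m0 + k0)) key
    rw [hL, hR] at this
    linear_combination this
  have hceq : c * Lm = Lk := mul_right_cancel₀ (mul_ne_zero ha hb) heq
  apply hcpow
  refine ⟨fun t => (k0 t : ℤ) - (m0 t : ℤ), ?_⟩
  have : (∏ t, lam t ^ ((k0 t : ℤ) - (m0 t : ℤ))) = Lk * Lm⁻¹ := by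
    rw [hLk, hLm, ← Finset.prod_inv_distrib, ← Finset.prod_mul_distrib]
    apply Finset.prod_congr rfl
    intro t _
    rw [zpow_sub₀ (hlam t), zpow_natCast, zpow_natCast]
    rw [div_eq_mul_inv]
  rw [this, ← hceq]
  field_simp
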